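/- Let p be an odd prime, u a positive odd integer coprime to p, and w a positive even integer with wp - u > 0. Then the product of Jacobi symbols (p/u)·(p/(wp−u)) equals (−1)^{(p−1)w/4}. -/
import Mathlib


/-- For `u` positive odd coprime to the odd prime `p` and `w` positive even
with `wp − u > 0`, the product of Jacobi symbols
`(p/u)·(p/(wp−u))` equals `(−1)^{(p−1)w/4}`. -/
theorem stmt_6 (p u w : ℕ) (hp : p.Prime) (hpodd : Odd p)
    (hu : Odd u) (hupos : 0 < u) (hcop : Nat.Coprime u p)
    (hw : Even w) (hwpos : 0 < w) (hlt : u < w * p) :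
    jacobiSym (p : ℤ) u * jacobiSym (p : ℤ) (w * p - u)
      = (-1 : ℤ) ^ ((p - 1) * w / 4) := by
  obtain ⟨k, hk⟩ := hpodd
  obtain ⟨i, hi⟩ := hu
  obtain ⟨j, hj⟩ := hw; rw [← two_mul] at hj
  set v := w * p - u with hv_def
  have hveq : v + u = w * p := Nat.sub_add_cancel hlt.le
  have hwp : w * p = 2 * (j * p) := by rw [hj]; ring
  have hv_odd : Odd v := ⟨j * p - i - 1, by omega⟩
  obtain ⟨m, hm⟩ := hv_odd
  have hvodd : Odd v := ⟨m, hm⟩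
  have hpodd' : Odd p := ⟨k, hk⟩
  have hu' : Odd u := ⟨i, hi⟩
  -- quadratic reciprocity for both factors
  have h1 := jacobiSym.quadratic_reciprocity hpodd' hu'
  have h2 := jacobiSym.quadratic_reciprocity hpodd' hvodd
  -- J(v | p) = J(-u | p)
  have hmod : jacobiSym (v : ℤ) p = jacobiSym (-(u : ℤ)) p := by
    apply jacobiSym.mod_left'
    have : ((p : ℤ)) ∣ (-(u : ℤ)) - (v : ℤ) := by
      refine ⟨-(w : ℤ), ?_⟩
      have : (v : ℤ) + u = (w : ℤ) * p := by exact_mod_cast hveq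
      linarith
    exact Int.modEq_iff_dvd.mpr this
  have hneg : jacobiSym (-(u : ℤ)) p = (-1 : ℤ) ^ (p / 2) * jacobiSym (u : ℤ) p := by
    rw [jacobiSym.neg _ hpodd', ZMod.χ₄_eq_neg_one_pow (Nat.odd_iff.mp hpodd')]
  have hsq : jacobiSym (u : ℤ) p ^ 2 = 1 := by
    refine jacobiSym.sq_one ?_
    simpa [Int.gcd_natCast_natCast] using hcop
  rw [h1, h2, hmod, hneg]
  have : ((-1 : ℤ) ^ (p / 2 * (u / 2)) * jacobiSym (u : ℤ) p) *
      ((-1 : ℤ) ^ (p / 2 * (v / 2)) * ((-1 : ℤ) ^ (p / 2) * jacobiSym (u : ℤ) p))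
      = (-1 : ℤ) ^ (p / 2 * (u / 2) + p / 2 * (v / 2) + p / 2) := by
    rw [pow_add, pow_add]; ring_nf; rw [hsq]; ring
  rw [this]
  -- exponent computation
  have hp2 : p / 2 = k := by omega
  have hu2 : u / 2 = i := by omega
  have hv2 : v / 2 = m := by omega
  have hrhs : (p - 1) * w / 4 = k * j := by
    have h1 : p - 1 = 2 * k := by omega
    have : (p - 1) * w = 4 * (k * j) := by rw [h1, hj]; ring
    rw [this]; omega
  have hexp : p / 2 * (u / 2) + p / 2 * (v / 2) + p / 2 = p * (k * j) := by
    rw [hp2, hu2, hv2]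
    have hsum : i + m + 1 = j * p := by omega
    calc k * i + k * m + k = k * (i + m + 1) := by ring
    _ = k * (j * p) := by rw [hsum]
    _ = p * (k * j) := by ring
  rw [hexp, hrhs, pow_mul, Odd.neg_one_pow hpodd']
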